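/- arXiv:1606.03651 — 2 statements merged into one kernel-verified Lean document; each statement's English description precedes it below -/
import Mathlib

section
/- Let X be a real-valued random variable with unbounded distribution F and Y a random variable with P(Y=1)=P(Y=2)=1/2, and suppose (X,Y) follows an FGM distribution with parameter θ∈[−1,1]. Then for all x>0, P(XY>x) = (1/2)(F̄(x)+F̄(x/2)) + (θ/4)(F̄(x/2)−F̄(x)) − (θ/4)(F̄(x/2)²−F̄(x)²), and consequently P(XY>x) ~ (1/2)(F̄(x)+F̄(x/2)) + (θ/4)(F̄(x/2)−F̄(x)) as x→∞. -/
open MeasureTheory ProbabilityTheory Filter Set Asymptotics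

noncomputable section

/-- The tail (survival) function `x ↦ P(Z > x)` of a random variable `Z`. -/
def rvTail {Ω : Type*} [MeasureSpace Ω] (Z : Ω → ℝ) (x : ℝ) : ℝ :=
  (ℙ {ω | x < Z ω}).toReal

/-- The cumulative distribution function `x ↦ P(Z ≤ x)` of a random variable `Z`. -/
def rvCdf {Ω : Type*} [MeasureSpace Ω] (Z : Ω → ℝ) (x : ℝ) : ℝ :=
  (ℙ {ω | Z ω ≤ x}).toReal

/-- The left limit of the cdf, `G(y-) = P(Z < y)`. -/
def rvCdfLeft {Ω : Type*} [MeasureSpace Ω] (Z : Ω → ℝ) (y : ℝ) : ℝ :=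
  (ℙ {ω | Z ω < y}).toReal

/-- The distribution of `Z` is unbounded (above): its tail is positive for every `x > 0`. -/
def UnboundedDist {Ω : Type*} [MeasureSpace Ω] (Z : Ω → ℝ) : Prop :=
  ∀ x > 0, 0 < rvTail Z x

/-- The support `D_Z = {y : P(Z ∈ (y - δ, y + δ)) > 0 for all δ > 0}` of the
distribution of `Z`. -/
def distSupport {Ω : Type*} [MeasureSpace Ω] (Z : Ω → ℝ) : Set ℝ :=
  {y | ∀ δ > 0, 0 < ℙ {ω | Z ω ∈ Ioo (y - δ) (y + δ)}}

/-- The distribution of `Z` belongs to the class `L(γ)`: it is unbounded above and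
`P(Z > x - t) ~ e^{γ t} P(Z > x)` as `x → ∞`, for every `t > 0`. -/
def MemLGamma {Ω : Type*} [MeasureSpace Ω] (Z : Ω → ℝ) (γ : ℝ) : Prop :=
  UnboundedDist Z ∧
    ∀ t > 0, (fun x => rvTail Z (x - t)) ~[atTop] (fun x => Real.exp (γ * t) * rvTail Z x)

/-- The tail of the two-fold convolution of the distribution of `Z` with itself. -/
def convSqTail {Ω : Type*} [MeasureSpace Ω] (Z : Ω → ℝ) (x : ℝ) : ℝ :=
  (((Measure.map Z ℙ).conv (Measure.map Z ℙ)) (Ioi x)).toReal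

/-- The distribution of `Z` belongs to the class `S(γ)`: it belongs to `L(γ)`, the
exponential moment `c = ∫ e^{γ y} dV(y)` is finite, and the tail of the two-fold
convolution satisfies `V̄*²(x) ~ 2 c V̄(x)` as `x → ∞`. -/
def MemSGamma {Ω : Type*} [MeasureSpace Ω] (Z : Ω → ℝ) (γ : ℝ) : Prop :=
  MemLGamma Z γ ∧
    Integrable (fun y => Real.exp (γ * y)) (Measure.map Z ℙ) ∧
    (fun x => convSqTail Z x) ~[atTop]
      (fun x => 2 * (∫ y, Real.exp (γ * y) ∂(Measure.map Z ℙ)) * rvTail Z x)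

open Classical in
/-- `γ / β_G`, where `β_G = sup {y : G(y) < 1}` is the right endpoint of the distribution
of `Z`, with the convention that `γ / β_G = 0` when `β_G = ∞`.
(Note that `G(y) < 1 ↔ P(Z > y) > 0`.) -/
def gammaOverBeta {Ω : Type*} [MeasureSpace Ω] (Z : Ω → ℝ) (γ : ℝ) : ℝ :=
  if BddAbove {y : ℝ | 0 < rvTail Z y} then γ / sSup {y : ℝ | 0 < rvTail Z y} else 0

/-- Assumption 2: `Ḡ(b x) = o(H̄(x))` as `x → ∞` for every constant `b > 0`, where `G` is
the distribution of `Y` and `H` is the distribution of the product `X Y`. -/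
def Assumption2 {Ω : Type*} [MeasureSpace Ω] (X Y : Ω → ℝ) : Prop :=
  ∀ b > 0, (fun x => rvTail Y (b * x)) =o[atTop] fun x => rvTail (fun ω => X ω * Y ω) x

/-- Assumption 1: `K x y` is the conditional probability `P(X > x | Y = y)`, namely for
`y` in the support of `Y` it is the limit of `P(X > x | Y ∈ (y - δ, y + δ])` as `δ → 0+`,
and for `y` outside the support it is the unconditional probability `P(X > x)` (and then
`h y = 1`); `h : [0,∞) → (0,∞)` is a measurable function such that
`P(X > x | Y = y) ~ h(y) P(X > x)` as `x → ∞`, uniformly for `y ≥ 0`. -/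
def Assumption1 {Ω : Type*} [MeasureSpace Ω] (X Y : Ω → ℝ) (h : ℝ → ℝ) (K : ℝ → ℝ → ℝ) :
    Prop :=
  Measurable h ∧ (∀ y, 0 ≤ y → 0 < h y) ∧
    (∀ y, y ∉ distSupport Y → h y = 1 ∧ ∀ x, K x y = rvTail X x) ∧
    (∀ y ∈ distSupport Y, ∀ x : ℝ,
      Tendsto
        (fun δ : ℝ => (ℙ {ω | x < X ω ∧ Y ω ∈ Ioc (y - δ) (y + δ)}).toReal /
          (ℙ {ω | Y ω ∈ Ioc (y - δ) (y + δ)}).toReal)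
        (nhdsWithin 0 (Ioi 0)) (nhds (K x y))) ∧
    ∀ ε > 0, ∀ᶠ x in atTop, ∀ y, 0 ≤ y → |K x y / (h y * rvTail X x) - 1| < ε

/-- `(X, Y)` follows a Farlie–Gumbel–Morgenstern (FGM) distribution with parameter
`θ ∈ [-1, 1]`: `P(X > x, Y > y) = F̄(x) Ḡ(y) (1 + θ F(x) G(y))` for all `x` in the
support of `X` and `y` in the support of `Y`. -/
def FGM {Ω : Type*} [MeasureSpace Ω] (X Y : Ω → ℝ) (θ : ℝ) : Prop :=
  θ ∈ Icc (-1 : ℝ) 1 ∧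
    ∀ x ∈ distSupport X, ∀ y ∈ distSupport Y,
      (ℙ {ω | x < X ω ∧ y < Y ω}).toReal =
        rvTail X x * rvTail Y y * (1 + θ * rvCdf X x * rvCdf Y y)

/-- `(X, Y)` follows a bivariate Sarmanov distribution with kernels `φ₁, φ₂` and
parameter `θ`: the joint law has density `1 + θ φ₁(x) φ₂(y)` with respect to the product
of the marginal laws, where `φ₁, φ₂` are measurable, `E φ₁(X) = E φ₂(Y) = 0` and
`1 + θ φ₁(x) φ₂(y) ≥ 0`. -/
def Sarmanov {Ω : Type*} [MeasureSpace Ω] (X Y : Ω → ℝ) (φ₁ φ₂ : ℝ → ℝ) (θ : ℝ) : Prop :=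
  Measurable φ₁ ∧ Measurable φ₂ ∧
    Integrable (fun ω => φ₁ (X ω)) ℙ ∧ Integrable (fun ω => φ₂ (Y ω)) ℙ ∧
    (∫ ω, φ₁ (X ω)) = 0 ∧ (∫ ω, φ₂ (Y ω)) = 0 ∧
    (∀ x y : ℝ, 0 ≤ y → 0 ≤ 1 + θ * φ₁ x * φ₂ y) ∧
    Measure.map (fun ω => (X ω, Y ω)) ℙ =
      ((Measure.map X ℙ).prod (Measure.map Y ℙ)).withDensity
        (fun p => ENNReal.ofReal (1 + θ * φ₁ p.1 * φ₂ p.2))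

/-- The condition `ψ(y) = lim_{δ → 0+} (∫_{y-δ}^{y+δ} φ₂(v) G(dv)) / (G(y+δ) - G(y-δ))`
for all `y` in the support of `Y`. -/
def SarmanovPsi {Ω : Type*} [MeasureSpace Ω] (Y : Ω → ℝ) (φ₂ ψ : ℝ → ℝ) : Prop :=
  ∀ y ∈ distSupport Y,
    Tendsto
      (fun δ : ℝ => (∫ v in Ioc (y - δ) (y + δ), φ₂ v ∂(Measure.map Y ℙ)) /
        (rvCdf Y (y + δ) - rvCdf Y (y - δ)))
      (nhdsWithin 0 (Ioi 0)) (nhds (ψ y))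


section auxlem
open Topology
variable {Ω : Type*} [MeasureSpace Ω] [IsProbabilityMeasure (ℙ : Measure Ω)]

omit [IsProbabilityMeasure (ℙ : Measure Ω)] in
lemma aux_isOpen_compl (X : Ω → ℝ) : IsOpen (distSupport X)ᶜ := by
  rw [Metric.isOpen_iff]
  intro y hy
  simp only [distSupport, mem_compl_iff, mem_setOf_eq, not_forall] at hy
  push_neg at hy
  obtain ⟨δ, hδ, h0⟩ := hy
  refine ⟨δ / 2, by positivity, fun z hz => ?_⟩
  simp only [Metric.mem_ball, Real.dist_eq] at hz
  simp only [distSupport, mem_compl_iff, mem_setOf_eq, not_forall]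
  push_neg
  refine ⟨δ / 2, by positivity, le_trans (measure_mono fun ω hω => ?_) h0⟩
  simp only [mem_setOf_eq, mem_Ioo] at hω ⊢
  cases' abs_lt.mp hz with h1 h2
  constructor <;> linarith [hω.1, hω.2]

omit [IsProbabilityMeasure (ℙ : Measure Ω)] in
lemma aux_support_ae (X : Ω → ℝ) (hXm : Measurable X) :
    ℙ {ω | X ω ∉ distSupport X} = 0 := by
  have hmeas : MeasurableSet ((distSupport X)ᶜ) := (aux_isOpen_compl X).measurableSet
  have h0 : (Measure.map X ℙ) ((distSupport X)ᶜ) = 0 := by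
    refine measure_null_of_locally_null _ fun y hy => ?_
    simp only [distSupport, mem_compl_iff, mem_setOf_eq, not_forall] at hy
    push_neg at hy
    obtain ⟨δ, hδ, hnull⟩ := hy
    refine ⟨Ioo (y - δ) (y + δ), ?_, ?_⟩
    · exact nhdsWithin_le_nhds (Ioo_mem_nhds (by linarith) (by linarith))
    · rw [Measure.map_apply hXm measurableSet_Ioo]
      exact nonpos_iff_eq_zero.mp hnull
  rw [Measure.map_apply hXm hmeas] at h0
  exact h0

lemma aux_cdf_eq (Z : Ω → ℝ) (hZ : Measurable Z) (t : ℝ) : rvCdf Z t = 1 - rvTail Z t := by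
  have hms : MeasurableSet {ω | t < Z ω} := hZ measurableSet_Ioi
  have h : ℙ {ω | Z ω ≤ t} = 1 - ℙ {ω | t < Z ω} := by
    rw [← prob_compl_eq_one_sub hms]
    congr 1
    ext ω; simp [not_lt]
  rw [rvCdf, rvTail, h, ENNReal.toReal_sub_of_le prob_le_one ENNReal.one_ne_top,
    ENNReal.toReal_one]

omit [IsProbabilityMeasure (ℙ : Measure Ω)] in
lemma aux_tail_tendsto (X : Ω → ℝ) (hXm : Measurable X) [IsFiniteMeasure (ℙ : Measure Ω)] :
    Tendsto (fun t => rvTail X t) atTop (𝓝 0) := by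
  have h : Tendsto (fun t : ℝ => ℙ {ω | t < X ω}) atTop (𝓝 (ℙ (⋂ t : ℝ, {ω | t < X ω}))) := by
    refine tendsto_measure_iInter_atTop
      (fun t => (hXm measurableSet_Ioi).nullMeasurableSet)
      (fun s t hst ω hω => by
        simp only [mem_setOf_eq] at hω ⊢
        linarith) ⟨0, measure_ne_top _ _⟩
  have hempty : (⋂ t : ℝ, {ω : Ω | t < X ω}) = ∅ := by
    ext ω
    simp only [mem_iInter, mem_setOf_eq, mem_empty_iff_false, iff_false, not_forall, not_lt]
    exact ⟨X ω, le_refl _⟩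
  rw [hempty, measure_empty] at h
  have := (ENNReal.tendsto_toReal (a := 0) (by simp)).comp h
  simpa [rvTail, Function.comp_def] using this

end auxlem

theorem product_tail_fgm_two_point {Ω : Type*} [MeasureSpace Ω] [IsProbabilityMeasure (ℙ : Measure Ω)]
    (X Y : Ω → ℝ) (hXm : Measurable X) (hYm : Measurable Y)
    (hFunb : UnboundedDist X)
    (hY1 : ℙ {ω | Y ω = 1} = 1 / 2) (hY2 : ℙ {ω | Y ω = 2} = 1 / 2)
    (θ : ℝ) (hFGM : FGM X Y θ) :
    (∀ x > 0,
        rvTail (fun ω => X ω * Y ω) x =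
          (1 / 2) * (rvTail X x + rvTail X (x / 2))
            + (θ / 4) * (rvTail X (x / 2) - rvTail X x)
            - (θ / 4) * ((rvTail X (x / 2)) ^ 2 - (rvTail X x) ^ 2)) ∧
      (fun x => rvTail (fun ω => X ω * Y ω) x) ~[atTop]
        (fun x => (1 / 2) * (rvTail X x + rvTail X (x / 2))
          + (θ / 4) * (rvTail X (x / 2) - rvTail X x)) := by
  obtain ⟨hθ, hFGMeq⟩ := hFGM
  have hd12 : Disjoint {ω | Y ω = 1} {ω | Y ω = 2} := by
    rw [Set.disjoint_left]
    intro ω h1 h2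
    simp only [mem_setOf_eq] at h1 h2
    rw [h1] at h2; norm_num at h2
  have hm1 : MeasurableSet {ω | Y ω = 1} := hYm (measurableSet_singleton 1)
  have hm2 : MeasurableSet {ω | Y ω = 2} := hYm (measurableSet_singleton 2)
  have hunion : ℙ ({ω | Y ω = 1} ∪ {ω | Y ω = 2}) = 1 := by
    rw [measure_union hd12 hm2, hY1, hY2, ENNReal.add_halves]
  have hae : ∀ᵐ ω ∂(ℙ : Measure Ω), Y ω = 1 ∨ Y ω = 2 := by
    rw [ae_iff]
    have : {ω | ¬(Y ω = 1 ∨ Y ω = 2)} = ({ω | Y ω = 1} ∪ {ω | Y ω = 2})ᶜ := by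
      ext ω; simp [not_or]
    rw [this, prob_compl_eq_one_sub (hm1.union hm2), hunion, tsub_self]
  have hcongr : ∀ (s t : Set Ω), (∀ ω, (Y ω = 1 ∨ Y ω = 2) → (ω ∈ s ↔ ω ∈ t)) → ℙ s = ℙ t := by
    intro s t h
    refine measure_congr ?_
    filter_upwards [hae] with ω hω
    exact eq_iff_iff.mpr (h ω hω)
  have htailY : rvTail Y 1 = 1 / 2 := by
    have h : ℙ {ω | 1 < Y ω} = ℙ {ω | Y ω = 2} := by
      refine hcongr _ _ fun ω hω => ?_
      simp only [mem_setOf_eq]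
      rcases hω with h | h <;> rw [h] <;> norm_num
    rw [rvTail, h, hY2]
    norm_num
  have hcdfY : rvCdf Y 1 = 1 / 2 := by
    have h : ℙ {ω | Y ω ≤ 1} = ℙ {ω | Y ω = 1} := by
      refine hcongr _ _ fun ω hω => ?_
      simp only [mem_setOf_eq]
      rcases hω with h | h <;> rw [h] <;> norm_num
    rw [rvCdf, h, hY1]
    norm_num
  have h1Y : (1 : ℝ) ∈ distSupport Y := by
    intro δ hδ
    have hsub : {ω | Y ω = 1} ⊆ {ω | Y ω ∈ Ioo (1 - δ) (1 + δ)} := by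
      intro ω h
      simp only [mem_setOf_eq] at h ⊢
      rw [h]
      constructor <;> simp [mem_Ioo] <;> linarith
    calc (0 : ENNReal) < 1 / 2 := ENNReal.div_pos one_ne_zero ENNReal.ofNat_ne_top
      _ = ℙ {ω | Y ω = 1} := hY1.symm
      _ ≤ _ := measure_mono hsub
  have hXnull := aux_support_ae X hXm
  -- the key formula for J(t) = P(X > t, Y > 1)
  have hJ : ∀ t : ℝ, (ℙ {ω | t < X ω ∧ 1 < Y ω}).toReal =
      rvTail X t * (1 / 2) * (1 + θ * rvCdf X t * (1 / 2)) := by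
    intro t
    by_cases hA : (distSupport X ∩ Iic t).Nonempty
    · have hScl : IsClosed (distSupport X) := isOpen_compl_iff.mp (aux_isOpen_compl X)
      have hAcl : IsClosed (distSupport X ∩ Iic t) := hScl.inter isClosed_Iic
      have hAbdd : BddAbove (distSupport X ∩ Iic t) := ⟨t, fun a ha => ha.2⟩
      set b := sSup (distSupport X ∩ Iic t) with hbdef
      have hbA : b ∈ distSupport X ∩ Iic t := hAcl.csSup_mem hA hAbdd
      have hbt : b ≤ t := hbA.2
      have hIocnull : ℙ {ω | X ω ∈ Ioc b t} = 0 := by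
        refine measure_mono_null (fun ω hω => ?_) hXnull
        simp only [mem_setOf_eq, mem_Ioc] at hω ⊢
        intro hS
        exact absurd (le_csSup hAbdd ⟨hS, hω.2⟩) (not_le.mpr hω.1)
      have transfer : ∀ Q R : Set Ω, R ⊆ Q → Q ⊆ R ∪ {ω | X ω ∈ Ioc b t} → ℙ Q = ℙ R := by
        intro Q R h1 h2
        refine le_antisymm ?_ (measure_mono h1)
        calc ℙ Q ≤ ℙ (R ∪ {ω | X ω ∈ Ioc b t}) := measure_mono h2
          _ ≤ ℙ R + ℙ {ω | X ω ∈ Ioc b t} := measure_union_le _ _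
          _ = ℙ R := by rw [hIocnull, add_zero]
      have h1 : ℙ {ω | X ω ≤ t} = ℙ {ω | X ω ≤ b} := by
        refine transfer _ _ (fun ω h => le_trans h hbt) (fun ω h => ?_)
        by_cases hbw : X ω ≤ b
        · exact Or.inl hbw
        · exact Or.inr ⟨lt_of_not_ge hbw, h⟩
      have h2 : ℙ {ω | b < X ω} = ℙ {ω | t < X ω} := by
        refine transfer _ _ (fun ω h => lt_of_le_of_lt hbt h) (fun ω h => ?_)
        by_cases htw : t < X ω
        · exact Or.inl htw
        · exact Or.inr ⟨h, le_of_not_gt htw⟩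
      have h3 : ℙ {ω | b < X ω ∧ 1 < Y ω} = ℙ {ω | t < X ω ∧ 1 < Y ω} := by
        refine transfer _ _ (fun ω h => ⟨lt_of_le_of_lt hbt h.1, h.2⟩) (fun ω h => ?_)
        by_cases htw : t < X ω
        · exact Or.inl ⟨htw, h.2⟩
        · exact Or.inr ⟨h.1, le_of_not_gt htw⟩
      have e1 : rvTail X t = rvTail X b := by rw [rvTail, rvTail, ← h2]
      have e2 : rvCdf X t = rvCdf X b := by rw [rvCdf, rvCdf, h1]
      rw [← h3, hFGMeq b hbA.1 1 h1Y, htailY, hcdfY, e1, e2]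
    · have hIic : ℙ {ω | X ω ≤ t} = 0 := by
        refine measure_mono_null (fun ω hω => ?_) hXnull
        intro hS
        exact hA ⟨X ω, hS, hω⟩
      have hcdf0 : rvCdf X t = 0 := by rw [rvCdf, hIic]; simp
      have htail1 : rvTail X t = 1 := by
        have h := aux_cdf_eq X hXm t
        rw [hcdf0] at h
        linarith
      have hset : ℙ {ω | t < X ω ∧ 1 < Y ω} = ℙ {ω | 1 < Y ω} := by
        refine measure_congr ?_
        have haeX : ∀ᵐ ω ∂(ℙ : Measure Ω), t < X ω := by
          rw [ae_iff]
          have : {ω | ¬ t < X ω} = {ω | X ω ≤ t} := by ext ω; simp [not_lt]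
          rw [this]; exact hIic
        filter_upwards [haeX] with ω h
        simp only [mem_setOf_eq, eq_iff_iff]
        exact ⟨fun hh => hh.2, fun hh => ⟨h, hh⟩⟩
      have : (ℙ {ω | 1 < Y ω}).toReal = rvTail Y 1 := rfl
      rw [hset, this, htailY, htail1, hcdf0]
      ring
  have fin : ∀ s : Set Ω, ℙ s ≠ ⊤ := fun s => measure_ne_top _ _
  have heq2 : ∀ t : ℝ, ℙ {ω | t < X ω ∧ Y ω = 2} = ℙ {ω | t < X ω ∧ 1 < Y ω} := by
    intro t
    refine hcongr _ _ fun ω hω => ?_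
    simp only [mem_setOf_eq]
    rcases hω with h | h <;> rw [h] <;> norm_num
  -- pointwise formula
  have hpoint : ∀ x > 0,
      rvTail (fun ω => X ω * Y ω) x =
        (1 / 2) * (rvTail X x + rvTail X (x / 2))
          + (θ / 4) * (rvTail X (x / 2) - rvTail X x)
          - (θ / 4) * ((rvTail X (x / 2)) ^ 2 - (rvTail X x) ^ 2) := by
    intro x hx
    have hsplitXY : ℙ {ω | x < X ω * Y ω} =
        ℙ {ω | x < X ω ∧ Y ω = 1} + ℙ {ω | x / 2 < X ω ∧ Y ω = 2} := by
      have hsets : ℙ {ω | x < X ω * Y ω} =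
          ℙ ({ω | x < X ω ∧ Y ω = 1} ∪ {ω | x / 2 < X ω ∧ Y ω = 2}) := by
        refine hcongr _ _ fun ω hω => ?_
        simp only [mem_setOf_eq, mem_union]
        rcases hω with h | h <;> rw [h] <;> norm_num
        rw [div_lt_iff₀ (by norm_num : (0:ℝ) < 2)]
      rw [hsets]
      have hmeas2 : MeasurableSet {ω | x / 2 < X ω ∧ Y ω = 2} :=
        (hXm measurableSet_Ioi).inter (hYm (measurableSet_singleton 2))
      refine measure_union ?_ hmeas2
      rw [Set.disjoint_left]
      intro ω ha hb
      simp only [mem_setOf_eq] at ha hb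
      rw [ha.2] at hb
      norm_num at hb
    have hsplitX : ℙ {ω | x < X ω} =
        ℙ {ω | x < X ω ∧ Y ω = 1} + ℙ {ω | x < X ω ∧ Y ω = 2} := by
      have hsets : ℙ {ω | x < X ω} =
          ℙ ({ω | x < X ω ∧ Y ω = 1} ∪ {ω | x < X ω ∧ Y ω = 2}) := by
        refine hcongr _ _ fun ω hω => ?_
        simp only [mem_setOf_eq, mem_union]
        rcases hω with h | h <;> rw [h] <;> norm_num
      rw [hsets]
      have hmeas2 : MeasurableSet {ω | x < X ω ∧ Y ω = 2} :=
        (hXm measurableSet_Ioi).inter (hYm (measurableSet_singleton 2))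
      refine measure_union ?_ hmeas2
      rw [Set.disjoint_left]
      intro ω ha hb
      simp only [mem_setOf_eq] at ha hb
      rw [ha.2] at hb
      norm_num at hb
    have hA' : (ℙ {ω | x < X ω ∧ Y ω = 1}).toReal =
        rvTail X x - (ℙ {ω | x < X ω ∧ 1 < Y ω}).toReal := by
      rw [← heq2, rvTail, hsplitX, ENNReal.toReal_add (fin _) (fin _)]
      ring
    have hfinal : rvTail (fun ω => X ω * Y ω) x =
        (ℙ {ω | x < X ω ∧ Y ω = 1}).toReal + (ℙ {ω | x / 2 < X ω ∧ 1 < Y ω}).toReal := by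
      rw [rvTail, hsplitXY, ENNReal.toReal_add (fin _) (fin _), heq2]
    rw [hfinal, hA', hJ x, hJ (x / 2), aux_cdf_eq X hXm x, aux_cdf_eq X hXm (x / 2)]
    ring
  refine ⟨hpoint, ?_⟩
  -- asymptotic equivalence
  have htend : Tendsto (fun x : ℝ => rvTail X (x / 2)) atTop (nhds 0) :=
    (aux_tail_tendsto X hXm).comp (tendsto_id.atTop_div_const (by norm_num : (0:ℝ) < 2))
  rw [Asymptotics.IsEquivalent]
  rw [Asymptotics.isLittleO_iff]
  intro c hc
  filter_upwards [eventually_gt_atTop (0 : ℝ), htend.eventually_lt_const hc]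
    with x hx hsmall
  have hpt := hpoint x hx
  have hmono : rvTail X x ≤ rvTail X (x / 2) := by
    refine ENNReal.toReal_mono (measure_ne_top _ _) (measure_mono fun ω hω => ?_)
    simp only [mem_setOf_eq] at hω ⊢
    linarith
  have hpos : 0 < rvTail X (x / 2) := hFunb (x / 2) (by linarith)
  have hnn : 0 ≤ rvTail X x := ENNReal.toReal_nonneg
  have hsq : rvTail X x ^ 2 ≤ rvTail X (x / 2) ^ 2 := by nlinarith
  have hgl : rvTail X (x / 2) / 4 ≤
      1 / 2 * (rvTail X x + rvTail X (x / 2)) + θ / 4 * (rvTail X (x / 2) - rvTail X x) := by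
    nlinarith [hθ.1, hθ.2]
  have hgpos : 0 < 1 / 2 * (rvTail X x + rvTail X (x / 2))
      + θ / 4 * (rvTail X (x / 2) - rvTail X x) := by linarith
  simp only [Pi.sub_apply]
  rw [Real.norm_eq_abs, Real.norm_eq_abs, abs_of_pos hgpos, abs_le]
  constructor <;> nlinarith [hθ.1, hθ.2, hc.le, hsmall.le, mul_le_mul_of_nonneg_left hgl hc.le]
end
end

section
/- Let X be a real-valued random variable with unbounded distribution F and Y a nonnegative random variable with distribution G, neither degenerate at zero, and suppose (X,Y) satisfies Assumption 1: there is a measurable function h:[0,∞)→(0,∞) such that P(X>x | Y=y) ~ h(y)P(X>x) as x→∞ uniformly in y≥0. Then (i) h is bounded above on the support D_Y of Y, i.e. there exists a constant M>0 such that h(y)≤M for all y∈D_Y, and (ii) E(h(Y))=1. -/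
open MeasureTheory ProbabilityTheory Filter Set Asymptotics
open Topology Metric

noncomputable section

section Aux

variable {Ω : Type*} [MeasureSpace Ω] [IsProbabilityMeasure (ℙ : Measure Ω)]

lemma isOpen_compl_distSupport (Y : Ω → ℝ) : IsOpen (distSupport Y)ᶜ := by
  rw [Metric.isOpen_iff]
  intro y hy
  simp only [distSupport, mem_compl_iff, mem_setOf_eq, not_forall, exists_prop] at hy
  obtain ⟨δ, hδpos, hδ⟩ := hy
  rw [not_lt, le_zero_iff] at hδ
  refine ⟨δ / 2, by positivity, fun y' hy' => ?_⟩
  rw [Real.ball_eq_Ioo] at hy'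
  simp only [distSupport, mem_compl_iff, mem_setOf_eq, not_forall, exists_prop]
  refine ⟨δ / 2, by positivity, ?_⟩
  rw [not_lt, le_zero_iff]
  refine measure_mono_null (fun ω hω => ?_) hδ
  simp only [mem_setOf_eq, mem_Ioo] at hω ⊢
  obtain ⟨h3, h4⟩ := hy'
  exact ⟨by linarith [hω.1], by linarith [hω.2]⟩

lemma map_compl_distSupport_null (Y : Ω → ℝ) (hYm : Measurable Y) :
    Measure.map Y ℙ (distSupport Y)ᶜ = 0 := by
  apply measure_null_of_locally_null
  intro y hy
  simp only [distSupport, mem_compl_iff, mem_setOf_eq, not_forall, exists_prop] at hy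
  obtain ⟨δ, hδpos, hδ⟩ := hy
  rw [not_lt, le_zero_iff] at hδ
  refine ⟨Ioo (y - δ) (y + δ), mem_nhdsWithin_of_mem_nhds
    (Ioo_mem_nhds (by linarith) (by linarith)), ?_⟩
  rw [Measure.map_apply hYm measurableSet_Ioo]
  exact hδ

lemma ae_mem_distSupport (Y : Ω → ℝ) (hYm : Measurable Y) :
    ∀ᵐ ω ∂(ℙ : Measure Ω), Y ω ∈ distSupport Y := by
  rw [ae_iff]
  have : {ω | ¬ Y ω ∈ distSupport Y} = Y ⁻¹' (distSupport Y)ᶜ := rfl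
  rw [this, ← Measure.map_apply hYm (isOpen_compl_distSupport Y).measurableSet]
  exact map_compl_distSupport_null Y hYm

lemma ae_map_mem_distSupport (Y : Ω → ℝ) (hYm : Measurable Y) :
    ∀ᵐ y ∂(Measure.map Y ℙ : Measure ℝ), y ∈ distSupport Y := by
  rw [ae_iff]
  exact map_compl_distSupport_null Y hYm

lemma distSupport_nonneg (Y : Ω → ℝ) (hYnonneg : ∀ ω, 0 ≤ Y ω) :
    ∀ y ∈ distSupport Y, 0 ≤ y := by
  intro y hy
  by_contra hneg
  push_neg at hneg
  have h1 := hy (-y) (by linarith)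
  have h2 : {ω | Y ω ∈ Ioo (y - -y) (y + -y)} = ∅ := by
    ext ω
    simp only [mem_setOf_eq, mem_Ioo, mem_empty_iff_false, iff_false, not_and, not_lt]
    intro _
    have := hYnonneg ω
    linarith
  rw [h2] at h1
  simp at h1

/-- The key disintegration identity: `∫ K(x, y) G(dy) = P(X > x)`. -/
lemma integral_K_eq (X Y : Ω → ℝ) (hXm : Measurable X) (hYm : Measurable Y)
    (K : ℝ → ℝ → ℝ)
    (hK : ∀ y ∈ distSupport Y, ∀ x : ℝ,
      Tendsto
        (fun δ : ℝ => (ℙ {ω | x < X ω ∧ Y ω ∈ Ioc (y - δ) (y + δ)}).toReal /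
          (ℙ {ω | Y ω ∈ Ioc (y - δ) (y + δ)}).toReal)
        (nhdsWithin 0 (Ioi 0)) (nhds (K x y))) (x : ℝ) :
    Integrable (fun y => K x y) (Measure.map Y ℙ) ∧
      ∫ y, K x y ∂(Measure.map Y ℙ) = rvTail X x := by
  set μ : Measure ℝ := Measure.map Y ℙ with hμdef
  set ν : Measure ℝ := Measure.map Y ((ℙ : Measure Ω).restrict {ω | x < X ω}) with hνdef
  haveI : IsProbabilityMeasure μ := Measure.isProbabilityMeasure_map hYm.aemeasurable
  haveI : IsFiniteMeasure ν := by
    constructor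
    rw [hνdef, Measure.map_apply hYm MeasurableSet.univ]
    exact (measure_lt_top _ _).trans_le le_top |>.trans_le le_rfl |>.trans_le le_rfl
  have hνs : ∀ s : Set ℝ, MeasurableSet s →
      ν s = ℙ {ω | x < X ω ∧ Y ω ∈ s} := by
    intro s hs
    rw [hνdef, Measure.map_apply hYm hs, Measure.restrict_apply (hYm hs)]
    congr 1
    ext ω
    simp only [mem_inter_iff, mem_preimage, mem_setOf_eq]
    exact and_comm
  have hle : ν ≤ μ := Measure.map_mono Measure.restrict_le_self hYm
  have hac : ν ≪ μ := hle.absolutelyContinuous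
  -- countable set of atoms of μ
  have hC : {t : ℝ | 0 < μ {t}}.Countable := by
    apply Measure.countable_meas_pos_of_disjoint_iUnion (As := fun t : ℝ => {t})
    · exact fun t => measurableSet_singleton t
    · intro s t hst
      simp [Function.onFun, hst]
  have hKae : ∀ᵐ y ∂μ, K x y = (ν.rnDeriv μ y).toReal := by
    filter_upwards [Besicovitch.ae_tendsto_rnDeriv ν μ, Measure.rnDeriv_lt_top ν μ,
      ae_map_mem_distSupport Y hYm] with y hyB hyfin hysupp
    -- choose a sequence δ n → 0+ avoiding atoms at `y - δ n`
    have hex : ∀ n : ℕ, ∃ δ : ℝ, δ ∈ Ioo (0 : ℝ) (1 / (n + 1)) ∧ μ {y - δ} = 0 := by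
      intro n
      by_contra hcon
      push_neg at hcon
      have hsub : Ioo (0 : ℝ) (1 / (n + 1)) ⊆ (fun δ => y - δ) ⁻¹' {t | 0 < μ {t}} := by
        intro δ hδ
        have := hcon δ hδ
        simpa [pos_iff_ne_zero] using this
      have hcnt : (Ioo (0 : ℝ) (1 / (n + 1))).Countable :=
        (hC.preimage (fun a b hab => by
          have hab' : y - a = y - b := hab
          linarith : Function.Injective fun δ : ℝ => y - δ)).mono hsub
      have hvol : (volume (Ioo (0 : ℝ) (1 / (n + 1)))) = 0 := hcnt.measure_zero _
      rw [Real.volume_Ioo] at hvol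
      simp only [sub_zero] at hvol
      rw [ENNReal.ofReal_eq_zero] at hvol
      have : (0 : ℝ) < 1 / (n + 1) := by positivity
      linarith
    choose δ hδmem hδatom using hex
    have hδpos : ∀ n, 0 < δ n := fun n => (hδmem n).1
    have hδlt : ∀ n, δ n < 1 / (n + 1) := fun n => (hδmem n).2
    have hδ0 : Tendsto δ atTop (𝓝 0) := by
      apply squeeze_zero (fun n => (hδpos n).le) (fun n => (hδlt n).le)
      exact tendsto_one_div_add_atTop_nhds_zero_nat
    have hδto : Tendsto δ atTop (𝓝[>] 0) :=
      tendsto_nhdsWithin_of_tendsto_nhds_of_eventually_within δ hδ0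
        (Eventually.of_forall fun n => hδpos n)
    -- the sequence of Ioc-ratios tends to K x y
    have h1 : Tendsto (fun n =>
        (ℙ {ω | x < X ω ∧ Y ω ∈ Ioc (y - δ n) (y + δ n)}).toReal /
          (ℙ {ω | Y ω ∈ Ioc (y - δ n) (y + δ n)}).toReal) atTop (𝓝 (K x y)) :=
      (hK y hysupp x).comp hδto
    -- the sequence of closedBall-ratios tends to the RN derivative
    have h2 : Tendsto (fun n => (ν (Metric.closedBall y (δ n))).toReal /
        (μ (Metric.closedBall y (δ n))).toReal) atTop (𝓝 ((ν.rnDeriv μ y).toReal)) := by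
      have := (ENNReal.tendsto_toReal hyfin.ne).comp (hyB.comp hδto)
      simpa only [Function.comp_def, ENNReal.toReal_div] using this
    -- the two sequences agree
    have heq : ∀ n, (ℙ {ω | x < X ω ∧ Y ω ∈ Ioc (y - δ n) (y + δ n)}).toReal /
        (ℙ {ω | Y ω ∈ Ioc (y - δ n) (y + δ n)}).toReal =
        (ν (Metric.closedBall y (δ n))).toReal / (μ (Metric.closedBall y (δ n))).toReal := by
      intro n
      have hab : y - δ n ≤ y + δ n := by linarith [hδpos n]
      have hIccIoc : ∀ (ρ : Measure ℝ), ρ {y - δ n} = 0 →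
          ρ (Icc (y - δ n) (y + δ n)) = ρ (Ioc (y - δ n) (y + δ n)) := by
        intro ρ hρ
        rw [← Ioc_insert_left hab]
        refine le_antisymm ?_ (measure_mono (subset_insert _ _))
        calc ρ (insert (y - δ n) (Ioc (y - δ n) (y + δ n)))
            ≤ ρ {y - δ n} + ρ (Ioc (y - δ n) (y + δ n)) := by
              rw [insert_eq]; exact measure_union_le _ _
          _ = ρ (Ioc (y - δ n) (y + δ n)) := by rw [hρ, zero_add]
      have hμIoc : μ (Ioc (y - δ n) (y + δ n)) = ℙ {ω | Y ω ∈ Ioc (y - δ n) (y + δ n)} :=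
        Measure.map_apply hYm measurableSet_Ioc
      have hνIoc : ν (Ioc (y - δ n) (y + δ n)) =
          ℙ {ω | x < X ω ∧ Y ω ∈ Ioc (y - δ n) (y + δ n)} := hνs _ measurableSet_Ioc
      rw [Real.closedBall_eq_Icc, hIccIoc μ (hδatom n),
        hIccIoc ν (hac (hδatom n)), hμIoc, hνIoc]
    rw [funext heq] at h1
    exact tendsto_nhds_unique h1 h2
  have hrn_int : Integrable (fun y => (ν.rnDeriv μ y).toReal) μ := by
    apply integrable_toReal_of_lintegral_ne_top (Measure.measurable_rnDeriv ν μ).aemeasurable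
    rw [Measure.lintegral_rnDeriv hac]
    exact measure_ne_top _ _
  have hνuniv : ν univ = ℙ {ω | x < X ω} := by
    rw [hνs univ MeasurableSet.univ]
    simp
  constructor
  · exact hrn_int.congr (hKae.mono fun y hy => hy.symm)
  · rw [integral_congr_ae hKae,
      integral_toReal (Measure.measurable_rnDeriv ν μ).aemeasurable (Measure.rnDeriv_lt_top ν μ),
      Measure.lintegral_rnDeriv hac, hνuniv]
    rfl

end Aux

theorem assumption1_h_bounded_and_mean_one {Ω : Type*} [MeasureSpace Ω] [IsProbabilityMeasure (ℙ : Measure Ω)]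
    (X Y : Ω → ℝ) (hXm : Measurable X) (hYm : Measurable Y)
    (hYnonneg : ∀ ω, 0 ≤ Y ω)
    (hFunb : UnboundedDist X)
    (hXnd : ℙ {ω | X ω = 0} ≠ 1) (hYnd : ℙ {ω | Y ω = 0} ≠ 1)
    (h : ℝ → ℝ) (K : ℝ → ℝ → ℝ) (hA1 : Assumption1 X Y h K) :
    (∃ M > 0, ∀ y ∈ distSupport Y, h y ≤ M) ∧
      Integrable (fun ω => h (Y ω)) ℙ ∧ (∫ ω, h (Y ω)) = 1 := by
  obtain ⟨hhm, hhpos, hoff, hKlim, hunif⟩ := hA1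
  set μ : Measure ℝ := Measure.map Y ℙ with hμdef
  haveI : IsProbabilityMeasure μ := Measure.isProbabilityMeasure_map hYm.aemeasurable
  -- the conditional probability is at most one on the support
  have hKle : ∀ x' : ℝ, ∀ y ∈ distSupport Y, K x' y ≤ 1 := by
    intro x' y hy
    refine le_of_tendsto (hKlim y hy x') (Eventually.of_forall fun δ => ?_)
    apply div_le_one_of_le₀
    · exact ENNReal.toReal_mono (measure_ne_top _ _) (measure_mono fun ω hω => hω.2)
    · exact ENNReal.toReal_nonneg
  -- pick a point where the uniform estimate holds with ε = 1/2
  obtain ⟨x₀, hx₀, hx₀pos⟩ :=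
    ((hunif (1 / 2) (by norm_num)).and (eventually_gt_atTop 0)).exists
  have hT : 0 < rvTail X x₀ := hFunb x₀ hx₀pos
  have hM : 0 < 2 / rvTail X x₀ := by positivity
  have hbd : ∀ y ∈ distSupport Y, h y ≤ 2 / rvTail X x₀ := by
    intro y hy
    have hy0 : 0 ≤ y := distSupport_nonneg Y hYnonneg y hy
    have h1 := hx₀ y hy0
    have hK1 := hKle x₀ y hy
    have hhy := hhpos y hy0
    have habs := abs_lt.1 h1
    have hr : 1 / 2 < K x₀ y / (h y * rvTail X x₀) := by linarith [habs.1]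
    have hpos : 0 < h y * rvTail X x₀ := mul_pos hhy hT
    rw [lt_div_iff₀ hpos] at hr
    rw [le_div_iff₀ hT]
    nlinarith
  have hYsupp := ae_mem_distSupport Y hYm
  have hint : Integrable (fun ω => h (Y ω)) ℙ := by
    refine (integrable_const (2 / rvTail X x₀)).mono' ((hhm.comp hYm).aestronglyMeasurable) ?_
    filter_upwards [hYsupp] with ω hω
    rw [Real.norm_eq_abs, abs_of_nonneg (hhpos _ (hYnonneg ω)).le]
    exact hbd _ hω
  refine ⟨⟨2 / rvTail X x₀, hM, hbd⟩, hint, ?_⟩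
  have hmap : ∫ ω, h (Y ω) ∂ℙ = ∫ y, h y ∂μ :=
    (integral_map hYm.aemeasurable hhm.aestronglyMeasurable).symm
  have hμsupp := ae_map_mem_distSupport Y hYm
  have hinth : Integrable h μ :=
    (integrable_map_measure hhm.aestronglyMeasurable hYm.aemeasurable).mpr hint
  have key : ∀ ε > 0, |(∫ y, h y ∂μ) - 1| ≤ ε * (2 / rvTail X x₀) := by
    intro ε hε
    obtain ⟨x', hx', hx'pos⟩ := ((hunif ε hε).and (eventually_gt_atTop 0)).exists
    have hT' : 0 < rvTail X x' := hFunb x' hx'pos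
    obtain ⟨hKint, hKeq⟩ := integral_K_eq X Y hXm hYm K hKlim x'
    have e2 : (1 : ℝ) = ∫ y, K x' y / rvTail X x' ∂μ := by
      rw [integral_div, hKeq, div_self hT'.ne']
    have e3 : (∫ y, h y ∂μ) - 1 = ∫ y, (h y - K x' y / rvTail X x') ∂μ := by
      rw [e2, ← integral_sub hinth (hKint.div_const _)]
    have hb : ∀ᵐ y ∂μ, ‖h y - K x' y / rvTail X x'‖ ≤ ε * (2 / rvTail X x₀) := by
      filter_upwards [hμsupp] with y hy
      have hy0 : 0 ≤ y := distSupport_nonneg Y hYnonneg y hy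
      have hhy := hhpos y hy0
      have hKb := hx' y hy0
      have hEq : h y - K x' y / rvTail X x' = h y * (1 - K x' y / (h y * rvTail X x')) := by
        field_simp
      rw [Real.norm_eq_abs, hEq, abs_mul, abs_of_nonneg hhy.le]
      have h2 : |1 - K x' y / (h y * rvTail X x')| < ε := by rw [abs_sub_comm]; exact hKb
      have h3 : h y ≤ 2 / rvTail X x₀ := hbd y hy
      calc h y * |1 - K x' y / (h y * rvTail X x')| ≤ (2 / rvTail X x₀) * ε :=
            mul_le_mul h3 h2.le (abs_nonneg _) hM.le
        _ = ε * (2 / rvTail X x₀) := mul_comm _ _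
    have hnorm := norm_integral_le_of_norm_le_const hb
    rw [probReal_univ, mul_one] at hnorm
    rw [e3]
    simpa [Real.norm_eq_abs] using hnorm
  rw [hmap]
  by_contra hne
  have habs : 0 < |(∫ y, h y ∂μ) - 1| := abs_pos.2 (sub_ne_zero.2 hne)
  have hk := key (|(∫ y, h y ∂μ) - 1| / (2 * (2 / rvTail X x₀))) (by positivity)
  rw [div_mul_eq_mul_div, mul_comm (2 : ℝ) (2 / rvTail X x₀), ← div_div,
    mul_div_assoc, div_self hM.ne', mul_one] at hk
  linarith
end
end
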